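/- The map sending each connected block graph G = (V, E) on the finite vertex set V to the family P_G = (π_0(G^(v)))_{v ∈ V} of partitions of V into connected components of the edge-deleted graphs G^(v) is a bijection from the set of connected block graphs on V onto the set of compatible families of V-partitions, with inverse P ↦ B_P = (V, E_P). -/

import Mathlib

/-- A compatible family of `V`-partitions: for each `v ∈ V` a partition of `V`,
recorded via its block function `blk v u` = the block of the partition `p_v`
containing `u`, such that `p_v[u] ∪ p_u[v] = V` for all distinct `u, v`, and
`{v} ∈ p_v` for all `v`. -/
structure CompFam (V : Type*) where
  blk : V → V → Set V
  mem_self : ∀ v u, u ∈ blk v u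
  eq_of_mem : ∀ v u w, w ∈ blk v u → blk v w = blk v u
  self_blk : ∀ v, blk v v = {v}
  compat : ∀ u v : V, u ≠ v → blk v u ∪ blk u v = Set.univ

/-- The graph `B_P = (V, E_P)` associated to a compatible family `P`:
`{u,v} ∈ E_P` iff `p_w[u] = p_w[v]` for all `w ∈ V − {u,v}`. -/
def BP {V : Type*} (P : CompFam V) : SimpleGraph V where
  Adj u v := u ≠ v ∧ ∀ w, w ≠ u → w ≠ v → P.blk w u = P.blk w v
  symm := ⟨fun u v h => ⟨h.1.symm, fun w h1 h2 => (h.2 w h2 h1).symm⟩⟩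
  loopless := ⟨fun u h => h.1 rfl⟩

/-- The graph obtained from `G` by deleting all edges incident to `v`. -/
def delV {V : Type*} (G : SimpleGraph V) (v : V) : SimpleGraph V where
  Adj a b := G.Adj a b ∧ a ≠ v ∧ b ≠ v
  symm := ⟨fun a b h => ⟨h.1.symm, h.2.2, h.2.1⟩⟩
  loopless := ⟨fun a h => G.loopless.irrefl a h.1⟩

/-- `u` and `v` lie on a common cycle (circuit) of `G`. -/
def hasCommonCycle {V : Type*} (G : SimpleGraph V) (u v : V) : Prop :=
  ∃ (a : V) (c : G.Walk a a), c.IsCycle ∧ u ∈ c.support ∧ v ∈ c.support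

/-- A block graph: every maximal 2-connected subgraph (block) is a clique;
equivalently, any two distinct vertices lying on a common cycle are adjacent. -/
def IsBlockGraph {V : Type*} (G : SimpleGraph V) : Prop :=
  ∀ u v : V, u ≠ v → hasCommonCycle G u v → G.Adj u v

open SimpleGraph Walk

section Helpers

variable {V : Type*}

/-! ### Basic lemmas about `delV` -/

lemma delV_adj {G : SimpleGraph V} {v a b : V} :
    (delV G v).Adj a b ↔ G.Adj a b ∧ a ≠ v ∧ b ≠ v := Iff.rfl

lemma delV_le (G : SimpleGraph V) (v : V) : delV G v ≤ G := fun _ _ h => h.1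

lemma delV_walk_not_mem_support {G : SimpleGraph V} {v a b : V}
    (p : (delV G v).Walk a b) (ha : a ≠ v) : v ∉ p.support := by
  induction p with
  | nil => simpa using ha.symm
  | cons h q ih =>
    simp only [Walk.support_cons, List.mem_cons]
    rintro (rfl | hv)
    · exact ha rfl
    · exact ih h.2.2 hv

/-- Transfer a walk of `delV G v` into `G`. -/
def delV_walk_toG {G : SimpleGraph V} {v a b : V} (p : (delV G v).Walk a b) : G.Walk a b :=
  p.transfer G (fun e he => SimpleGraph.edgeSet_mono (delV_le G v)
    (Walk.edges_subset_edgeSet p he))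

@[simp] lemma delV_walk_toG_support {G : SimpleGraph V} {v a b : V}
    (p : (delV G v).Walk a b) : (delV_walk_toG p).support = p.support :=
  Walk.support_transfer _ _

lemma delV_walk_toG_isPath {G : SimpleGraph V} {v a b : V}
    {p : (delV G v).Walk a b} (hp : p.IsPath) : (delV_walk_toG p).IsPath :=
  hp.transfer _

lemma delV_walk_toG_edges {G : SimpleGraph V} {v a b : V}
    (p : (delV G v).Walk a b) : (delV_walk_toG p).edges = p.edges :=
  Walk.edges_transfer _ _

/-- Transfer a walk of `G` avoiding `v` into `delV G v`. -/
lemma reachable_delV_of_walk {G : SimpleGraph V} {v a b : V}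
    (p : G.Walk a b) (hv : v ∉ p.support) : (delV G v).Reachable a b := by
  refine ⟨p.transfer (delV G v) ?_⟩
  intro e he
  induction e with
  | h x y =>
    rw [SimpleGraph.mem_edgeSet, delV_adj]
    refine ⟨(Walk.edges_subset_edgeSet p he : _), ?_, ?_⟩
    · intro h; exact hv (h ▸ Walk.fst_mem_support_of_mem_edges p he)
    · intro h; exact hv (h ▸ Walk.snd_mem_support_of_mem_edges p he)

lemma delV_reachable_isolated {G : SimpleGraph V} {v x : V}
    (h : (delV G v).Reachable v x) : x = v := by
  obtain ⟨p⟩ := h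
  cases p with
  | nil => rfl
  | cons h q => exact absurd rfl h.2.1

/-! ### Lemmas about compatible families -/

namespace CompFam

variable (P : CompFam V)

lemma mem_blk_comm {w x y : V} (h : x ∈ P.blk w y) : y ∈ P.blk w x := by
  rw [P.eq_of_mem w y x h]; exact P.mem_self w y

lemma mem_blk_comm_iff {w x y : V} : x ∈ P.blk w y ↔ y ∈ P.blk w x :=
  ⟨P.mem_blk_comm, P.mem_blk_comm⟩

lemma mem_self_blk_iff {v u : V} : v ∈ P.blk v u ↔ v = u := by
  constructor
  · intro h
    have h1 := P.eq_of_mem v u v h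
    rw [P.self_blk] at h1
    have := P.mem_self v u
    rw [← h1] at this
    exact (this : u ∈ ({v} : Set V)).symm
  · rintro rfl; exact P.mem_self v v

/-- Either `z` is in the block of `u` in `p_w`, or `w` is in the block of `u` in `p_z`. -/
lemma mem_or_mem {z w u : V} (hzw : z ≠ w) :
    z ∈ P.blk w u ∨ w ∈ P.blk z u := by
  by_cases h : z ∈ P.blk w u
  · exact Or.inl h
  · right
    have hu : u ∉ P.blk w z := fun hu => h (P.mem_blk_comm hu)
    have := P.compat z w hzw
    have hu2 : u ∈ P.blk w z ∪ P.blk z w := this ▸ Set.mem_univ u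
    rcases hu2 with h2 | h2
    · exact absurd h2 hu
    · exact P.mem_blk_comm h2

end CompFam

/-! ### The separator set and walks in `BP P` -/

open Classical in
/-- The set of vertices separating `u` from `v` according to `P`. -/
noncomputable def sep [Fintype V] (P : CompFam V) (u v : V) : Finset V :=
  Finset.univ.filter fun z => z ≠ u ∧ z ≠ v ∧ v ∉ P.blk z u

lemma mem_sep [Fintype V] {P : CompFam V} {u v z : V} :
    z ∈ sep P u v ↔ z ≠ u ∧ z ≠ v ∧ v ∉ P.blk z u := by
  simp [sep]

lemma sep_symm [Fintype V] (P : CompFam V) (u v : V) : sep P u v = sep P v u := by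
  ext z
  simp only [mem_sep]
  constructor
  · rintro ⟨h1, h2, h3⟩
    exact ⟨h2, h1, fun h => h3 (P.mem_blk_comm h)⟩
  · rintro ⟨h1, h2, h3⟩
    exact ⟨h2, h1, fun h => h3 (P.mem_blk_comm h)⟩

lemma sep_shrink [Fintype V] {P : CompFam V} {u v w : V} (hw : w ∈ sep P u v) :
    sep P u w ⊆ sep P u v := by
  obtain ⟨hwu, hwv, hvw⟩ := mem_sep.mp hw
  intro z hz
  obtain ⟨hzu, hzw, hwz⟩ := mem_sep.mp hz
  have hzv : z ≠ v := by
    rintro rfl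
    rcases P.mem_or_mem (u := u) hzw with h | h
    · exact hvw h
    · exact hwz h
  refine mem_sep.mpr ⟨hzu, hzv, ?_⟩
  intro hv
  rcases P.mem_or_mem (u := u) hzw.symm.symm with h | h
  · -- z ∈ blk w u
    have h1 : P.blk w z = P.blk w u := P.eq_of_mem w u z h
    have h2 : v ∉ P.blk w z := h1 ▸ hvw
    have h3 : v ∈ P.blk z w := by
      have := P.compat z w hzw
      have : v ∈ P.blk w z ∪ P.blk z w := this ▸ Set.mem_univ v
      rcases this with h' | h'
      · exact absurd h' h2
      · exact h'
    have h4 : P.blk z v = P.blk z w := P.eq_of_mem z w v h3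
    have h5 : P.blk z v = P.blk z u := P.eq_of_mem z u v hv
    have : w ∈ P.blk z u := by
      rw [← h5, h4]; exact P.mem_self z w
    exact hwz this
  · exact hwz h

lemma BP_adj {P : CompFam V} {u v : V} :
    (BP P).Adj u v ↔ u ≠ v ∧ ∀ w, w ≠ u → w ≠ v → P.blk w u = P.blk w v := Iff.rfl

/-- Along a walk in `BP P` avoiding `w`, the block of `p_w` is constant. -/
lemma blk_const_of_walk {P : CompFam V} {w a b : V}
    (p : (BP P).Walk a b) (hw : w ∉ p.support) : P.blk w a = P.blk w b := by
  induction p with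
  | nil => rfl
  | cons h q ih =>
    simp only [Walk.support_cons, List.mem_cons] at hw
    push_neg at hw
    have h1 := h.2 w hw.1 (fun hwb => hw.2 (hwb ▸ q.start_mem_support))
    exact h1.trans (ih hw.2)

lemma exists_walk_BP [Fintype V] (P : CompFam V) :
    ∀ (n : ℕ) (u v : V), u ≠ v → (sep P u v).card ≤ n →
      ∃ p : (BP P).Walk u v, ∀ z ∈ p.support, z = u ∨ z = v ∨ z ∈ sep P u v := by
  intro n
  induction n using Nat.strong_induction_on with
  | _ n ih =>
    intro u v huv hcard
    by_cases hs : sep P u v = ∅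
    · have hadj : (BP P).Adj u v := by
        refine ⟨huv, fun w hwu hwv => ?_⟩
        by_cases hvw : v ∈ P.blk w u
        · exact (P.eq_of_mem w u v hvw).symm
        · exact absurd (mem_sep.mpr ⟨hwu, hwv, hvw⟩) (by simp [hs])
      refine ⟨Walk.cons hadj Walk.nil, fun z hz => ?_⟩
      simp only [Walk.support_cons, Walk.support_nil, List.mem_cons,
        List.mem_singleton] at hz
      rcases hz with rfl | rfl | h
      · exact Or.inl rfl
      · exact Or.inr (Or.inl rfl)
      · exact absurd h List.not_mem_nil
    · obtain ⟨w, hw⟩ := Finset.nonempty_iff_ne_empty.mpr hs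
      obtain ⟨hwu, hwv, _⟩ := mem_sep.mp hw
      have hsub1 : sep P u w ⊆ sep P u v := sep_shrink hw
      have hw1 : w ∉ sep P u w := fun h => (mem_sep.mp h).2.1 rfl
      have hlt1 : (sep P u w).card < (sep P u v).card :=
        Finset.card_lt_card (Finset.ssubset_iff_of_subset hsub1 |>.mpr ⟨w, hw, hw1⟩)
      have hw' : w ∈ sep P v u := sep_symm P u v ▸ hw
      have hsub2 : sep P w v ⊆ sep P u v := by
        rw [sep_symm P w v]
        exact (sep_symm P u v) ▸ sep_shrink hw'
      have hw2 : w ∉ sep P w v := fun h => (mem_sep.mp h).1 rfl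
      have hlt2 : (sep P w v).card < (sep P u v).card :=
        Finset.card_lt_card (Finset.ssubset_iff_of_subset hsub2 |>.mpr ⟨w, hw, hw2⟩)
      have hn : 0 < n := by
        rcases Nat.eq_zero_or_pos n with h0 | h0
        · subst h0
          rw [Nat.le_zero, Finset.card_eq_zero] at hcard
          exact absurd hcard hs
        · exact h0
      have h1 : (sep P u w).card ≤ n - 1 := Nat.le_sub_one_of_lt (lt_of_lt_of_le hlt1 hcard)
      have h2 : (sep P w v).card ≤ n - 1 := Nat.le_sub_one_of_lt (lt_of_lt_of_le hlt2 hcard)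
      obtain ⟨p1, hp1⟩ := ih (n - 1) (Nat.sub_lt hn one_pos) u w (Ne.symm hwu) h1
      obtain ⟨p2, hp2⟩ := ih (n - 1) (Nat.sub_lt hn one_pos) w v hwv h2
      refine ⟨p1.append p2, fun z hz => ?_⟩
      rw [Walk.mem_support_append_iff] at hz
      rcases hz with hz | hz
      · rcases hp1 z hz with rfl | rfl | h
        · exact Or.inl rfl
        · exact Or.inr (Or.inr hw)
        · exact Or.inr (Or.inr (hsub1 h))
      · rcases hp2 z hz with rfl | rfl | h
        · exact Or.inr (Or.inr hw)
        · exact Or.inr (Or.inl rfl)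
        · exact Or.inr (Or.inr (hsub2 h))

lemma BP_connected [Fintype V] [Nonempty V] (P : CompFam V) : (BP P).Connected := by
  rw [SimpleGraph.connected_iff]
  refine ⟨fun u v => ?_, inferInstance⟩
  by_cases huv : u = v
  · exact huv ▸ SimpleGraph.Reachable.refl u
  · obtain ⟨p, _⟩ := exists_walk_BP P (sep P u v).card u v huv le_rfl
    exact ⟨p⟩

/-- last vertex is in the tail of the support for non-nil walks -/
lemma end_mem_support_tail {G : SimpleGraph V} {a : V} (p : G.Walk a a)
    (h : p ≠ Walk.nil) : a ∈ p.support.tail := by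
  cases p with
  | nil => exact absurd rfl h
  | cons h' q => simpa using q.end_mem_support

lemma BP_blockGraph [Fintype V] (P : CompFam V) : IsBlockGraph (BP P) := by
  classical
  rintro u v huv ⟨a, c, hc, hu, hv⟩
  refine ⟨huv, fun w hwu hwv => ?_⟩
  -- rotate the cycle to start at u
  set c' := c.rotate u hu with hc'def
  have hc' : c'.IsCycle := hc.rotate hu
  have hvtail : v ∈ c.support.tail := by
    by_cases hva : v = a
    · subst hva
      exact end_mem_support_tail c (by rintro rfl; exact hc.ne_nil rfl)
    · rw [Walk.support_eq_cons] at hv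
      rcases List.mem_cons.mp hv with h | h
      · exact absurd h hva
      · exact h
  have hv' : v ∈ c'.support := by
    have hrot := Walk.support_rotate c u hu
    have : v ∈ c'.support.tail := hrot.mem_iff.mpr hvtail
    exact List.mem_of_mem_tail this
  set t := c'.takeUntil v hv' with htdef
  set d := c'.dropUntil v hv' with hddef
  have hspec : t.append d = c' := c'.take_spec hv'
  have hnodup : c'.support.tail.Nodup := hc'.support_nodup
  have htail : c'.support.tail = t.support.tail ++ d.support.tail := by
    rw [← hspec, Walk.tail_support_append]
  rw [htail] at hnodup
  have hdisj := List.disjoint_of_nodup_append hnodup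
  by_cases hwt : w ∈ t.support
  · -- w is not in d's support
    have hwt' : w ∈ t.support.tail := by
      rw [Walk.support_eq_cons] at hwt
      rcases List.mem_cons.mp hwt with h | h
      · exact absurd h hwu
      · exact h
    have hwd : w ∉ d.support := by
      intro hwd
      rw [Walk.support_eq_cons] at hwd
      rcases List.mem_cons.mp hwd with h | h
      · exact hwv h
      · exact hdisj hwt' h
    exact (blk_const_of_walk d hwd).symm
  · exact blk_const_of_walk t hwt

end Helpers

section Forward

variable {V : Type*}

/-- The family of partitions attached to a graph. -/
def Fblk (G : SimpleGraph V) : V → V → Set V :=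
  fun v u => {x | (delV G v).Reachable u x}

lemma Fblk_compat {G : SimpleGraph V} (hG : G.Connected) (u v : V) (huv : u ≠ v) :
    Fblk G v u ∪ Fblk G u v = Set.univ := by
  classical
  ext x
  simp only [Set.mem_union, Set.mem_univ, iff_true, Fblk, Set.mem_setOf_eq]
  by_cases hxu : x = u
  · subst hxu; exact Or.inl (SimpleGraph.Reachable.refl x)
  by_cases hxv : x = v
  · subst hxv; exact Or.inr (SimpleGraph.Reachable.refl x)
  obtain ⟨p0⟩ := hG.preconnected x u
  set p := p0.toPath.1 with hpdef
  have hp : p.IsPath := p0.toPath.2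
  by_cases hv : v ∈ p.support
  · -- use the walk up to v, it avoids u
    right
    set t := p.takeUntil v hv with htdef
    have hu : u ∉ t.support := by
      intro hut
      have hspec : t.append (p.dropUntil v hv) = p := p.take_spec hv
      have hnodup : p.support.Nodup := hp.support_nodup
      rw [← hspec, Walk.support_append] at hnodup
      have hdisj := List.disjoint_of_nodup_append hnodup
      have hud : u ∈ (p.dropUntil v hv).support := (p.dropUntil v hv).end_mem_support
      have hud' : u ∈ (p.dropUntil v hv).support.tail := by
        rw [Walk.support_eq_cons] at hud
        rcases List.mem_cons.mp hud with h | h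
        · exact absurd h huv
        · exact h
      exact hdisj hut hud'
    exact (reachable_delV_of_walk t hu).symm
  · exact Or.inl (reachable_delV_of_walk p hv).symm

/-- The forward map on the underlying data. -/
def FG (G : SimpleGraph V) (hG : G.Connected) : CompFam V where
  blk := Fblk G
  mem_self := fun v u => SimpleGraph.Reachable.refl u
  eq_of_mem := fun v u w h => by
    ext x
    exact ⟨fun hx => (h : (delV G v).Reachable u w).trans hx,
      fun hx => (h : (delV G v).Reachable u w).symm.trans hx⟩
  self_blk := fun v => by
    ext x
    simp only [Fblk, Set.mem_setOf_eq, Set.mem_singleton_iff]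
    exact ⟨fun h => delV_reachable_isolated h, fun h => by have hx : x = v := h; subst hx; exact SimpleGraph.Reachable.refl _⟩
  compat := fun u v huv => Fblk_compat hG u v huv

end Forward

section LeftKey

variable {V : Type*}

/-- Key lemma: in a connected block graph, if `u,v` stay connected after deleting
any other single vertex, then they are adjacent. -/
lemma leftKey {G : SimpleGraph V} (hG : G.Connected) (hB : IsBlockGraph G) :
    ∀ (n : ℕ) (u v : V), G.dist u v ≤ n → u ≠ v →
      (∀ w, w ≠ u → w ≠ v → (delV G w).Reachable u v) → G.Adj u v := by
  classical
  intro n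
  induction n with
  | zero =>
    intro u v hd huv _
    exact absurd (hG.dist_eq_zero_iff.mp (Nat.le_zero.mp hd)) huv
  | succ n ih =>
    intro u v hd huv hsep
    obtain ⟨p, hp⟩ := hG.exists_walk_length_eq_dist u v
    have hdpos : 0 < G.dist u v := hG.pos_dist_of_ne huv
    cases p with
    | nil => simp at hdpos
    | @cons _ x _ h q =>
      by_cases hxv : x = v
      · exact hxv ▸ h
      have hql : q.length + 1 = G.dist u v := by simpa using hp
      have hdist_xv : G.dist x v ≤ n := by
        have := SimpleGraph.dist_le q
        omega
      have hu_not_q : u ∉ q.support := by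
        intro hu
        have hle := Walk.length_dropUntil_le q hu
        have := SimpleGraph.dist_le (q.dropUntil u hu)
        omega
      have hsep_xv : ∀ w, w ≠ x → w ≠ v → (delV G w).Reachable x v := by
        intro w hwx hwv
        by_cases hwu : w = u
        · exact hwu ▸ reachable_delV_of_walk q hu_not_q
        · have h1 : (delV G w).Reachable u v := hsep w hwu hwv
          have h2 : (delV G w).Adj u x := ⟨h, Ne.symm hwu, Ne.symm hwx⟩
          exact h2.symm.reachable.trans h1
      have hxv_adj : G.Adj x v := ih x v hdist_xv hxv hsep_xv
      -- build a cycle through u and v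
      have hxu : x ≠ u := h.ne.symm
      obtain ⟨r0⟩ := hsep x hxu hxv
      set rp := r0.toPath.1 with hrpdef
      have hrp : rp.IsPath := r0.toPath.2
      have hx_not : x ∉ rp.support := delV_walk_not_mem_support rp (Ne.symm hxu)
      set rg := delV_walk_toG rp with hrgdef
      have hrg_path : rg.IsPath := delV_walk_toG_isPath hrp
      have hx_not' : x ∉ rg.support := by rw [delV_walk_toG_support]; exact hx_not
      set c : G.Walk u u := Walk.cons h (Walk.cons hxv_adj rg.reverse) with hcdef
      have hx_edges : ∀ y z : V, s(y, z) ∈ rg.edges → y ≠ x ∧ z ≠ x := by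
        intro y z he
        constructor
        · intro hyx; exact hx_not' (hyx ▸ Walk.fst_mem_support_of_mem_edges rg he)
        · intro hzx; exact hx_not' (hzx ▸ Walk.snd_mem_support_of_mem_edges rg he)
      have hc : c.IsCycle := by
        constructor
        constructor
        constructor
        · -- edges nodup
          rw [hcdef]
          simp only [Walk.edges_cons, List.nodup_cons, Walk.edges_reverse, List.mem_reverse,
            List.nodup_reverse, List.mem_cons]
          refine ⟨?_, ?_, hrg_path.isTrail.edges_nodup⟩
          · rintro (habs | habs)
            · rw [Sym2.eq_iff] at habs
              rcases habs with ⟨h1, h2⟩ | ⟨h1, h2⟩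
              · exact huv (h1.symm ▸ h2)
              · exact huv h1
            · exact (hx_edges u x habs).2 rfl
          · intro habs
            exact (hx_edges x v habs).1 rfl
        · -- nonempty
          simp [hcdef]
        · -- support tail nodup
          rw [hcdef]
          simp only [Walk.support_cons, List.tail_cons, List.nodup_cons,
            Walk.support_reverse, List.mem_reverse, List.nodup_reverse]
          exact ⟨hx_not', hrg_path.support_nodup⟩
      exact hB u v huv ⟨u, c, hc, c.start_mem_support, by
        rw [hcdef]
        simp only [Walk.support_cons, List.mem_cons]
        right; right
        rw [Walk.support_reverse]
        exact List.mem_reverse.mpr rg.end_mem_support⟩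

end LeftKey

section RightInv

variable {V : Type*}

lemma CompFam.ext' {P Q : CompFam V} (h : P.blk = Q.blk) : P = Q := by
  cases P; cases Q; cases h; rfl

lemma blk_const_of_delV_walk {P : CompFam V} {v a b : V}
    (p : (delV (BP P) v).Walk a b) : P.blk v a = P.blk v b := by
  induction p with
  | nil => rfl
  | cons h q ih =>
    exact (h.1.2 v (Ne.symm h.2.1) (Ne.symm h.2.2)).trans ih

lemma rightInv_blk [Fintype V] (P : CompFam V) (v u : V) :
    Fblk (BP P) v u = P.blk v u := by
  ext x
  simp only [Fblk, Set.mem_setOf_eq]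
  constructor
  · rintro ⟨p⟩
    have h := blk_const_of_delV_walk p
    rw [h]
    exact P.mem_self v x
  · intro hx
    classical
    by_cases huv : u = v
    · subst huv
      rw [P.self_blk] at hx
      have : x = u := hx
      subst this
      exact SimpleGraph.Reachable.refl x
    by_cases hxv : x = v
    · subst hxv
      exact absurd ((P.mem_self_blk_iff).mp hx).symm huv
    by_cases hux : u = x
    · subst hux; exact SimpleGraph.Reachable.refl u
    obtain ⟨p, hsupp⟩ := exists_walk_BP P (sep P u x).card u x hux le_rfl
    have hv_not : v ∉ p.support := by
      intro hv
      rcases hsupp v hv with rfl | rfl | hmem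
      · exact huv rfl
      · exact hxv rfl
      · exact (mem_sep.mp hmem).2.2 hx
    exact reachable_delV_of_walk p hv_not

end RightInv

theorem block_graphs_equiv_compatible_families {V : Type*} [Fintype V] [Nonempty V] :
    ∃ e : {G : SimpleGraph V // G.Connected ∧ IsBlockGraph G} ≃ CompFam V,
      (∀ G : {G : SimpleGraph V // G.Connected ∧ IsBlockGraph G},
        (e G).blk = fun v u => {x | (delV G.1 v).Reachable u x}) ∧
      (∀ P : CompFam V, (e.symm P).1 = BP P) := by
  refine ⟨⟨fun GG => FG GG.1 GG.2.1,
          fun P => ⟨BP P, BP_connected P, BP_blockGraph P⟩, ?_, ?_⟩, fun G => rfl, fun P => rfl⟩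
  · -- left inverse
    rintro ⟨G, hG, hB⟩
    apply Subtype.ext
    dsimp only
    ext u v
    constructor
    · rintro ⟨huv, hall⟩
      apply leftKey hG hB (G.dist u v) u v le_rfl huv
      intro w hwu hwv
      have h := hall w hwu hwv
      have hu : u ∈ Fblk G w u := SimpleGraph.Reachable.refl u
      rw [(by exact h : Fblk G w u = Fblk G w v)] at hu
      exact (hu : (delV G w).Reachable v u).symm
    · intro hadj
      refine ⟨hadj.ne, fun w hwu hwv => ?_⟩
      have hreach : (delV G w).Reachable u v :=
        SimpleGraph.Adj.reachable ⟨hadj, Ne.symm hwu, Ne.symm hwv⟩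
      ext x
      exact ⟨fun hx => hreach.symm.trans hx, fun hx => hreach.trans hx⟩
  · -- right inverse
    intro P
    apply CompFam.ext'
    funext v u
    exact rightInv_blk P v u
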